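/- Let I be a set of nonnegative real numbers. Then D(D(I)) = D(I) ∪ {1}. -/

import Mathlib

/-- A set of reals satisfies the descending chain condition if it contains
no infinite strictly decreasing sequence. -/
def DCC (S : Set ℝ) : Prop := ¬ ∃ f : ℕ → ℝ, (∀ n, f n ∈ S) ∧ StrictAnti f

/-- A set of reals satisfies the ascending chain condition if it contains
no infinite strictly increasing sequence. -/
def ACC (S : Set ℝ) : Prop := ¬ ∃ f : ℕ → ℝ, (∀ n, f n ∈ S) ∧ StrictMono f

/-- `I⁺ = {0} ∪ {x ∈ [0,1] | x is a finite (nonempty) sum of elements of I}`. -/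
def plusSet (I : Set ℝ) : Set ℝ :=
  {0} ∪ {x | 0 ≤ x ∧ x ≤ 1 ∧ ∃ l : List ℝ, l ≠ [] ∧ (∀ j ∈ l, j ∈ I) ∧ l.sum = x}

/-- `D(I) = {a ≤ 1 | a = (m - 1 + f)/m, m ∈ ℤ_{>0}, f ∈ I⁺}`. -/
def DSet (I : Set ℝ) : Set ℝ :=
  {a | a ≤ 1 ∧ ∃ m : ℕ, 0 < m ∧ ∃ f ∈ plusSet I, a = ((m : ℝ) - 1 + f) / m}

/-- `D_d(I) = {a ≤ 1 | a = (m - 1 + f + k·d)/m, k, m ∈ ℤ_{>0}, f ∈ I⁺}`. -/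
def DdSet (d : ℝ) (I : Set ℝ) : Set ℝ :=
  {a | a ≤ 1 ∧ ∃ k m : ℕ, 0 < k ∧ 0 < m ∧ ∃ f ∈ plusSet I,
    a = ((m : ℝ) - 1 + f + (k : ℝ) * d) / m}

def IsSumOf (I : Set ℝ) (x : ℝ) : Prop :=
  ∃ l : List ℝ, (∀ j ∈ l, j ∈ I) ∧ l.sum = x

lemma isSumOf_zero (I : Set ℝ) : IsSumOf I 0 := ⟨[], by simp, by simp⟩

lemma isSumOf_add {I : Set ℝ} {x y : ℝ} (hx : IsSumOf I x) (hy : IsSumOf I y) :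
    IsSumOf I (x + y) := by
  obtain ⟨l1, h1, e1⟩ := hx
  obtain ⟨l2, h2, e2⟩ := hy
  exact ⟨l1 ++ l2, by intro j hj; rcases List.mem_append.1 hj with h | h
                      exacts [h1 j h, h2 j h], by simp [e1, e2]⟩

lemma isSumOf_nsmul {I : Set ℝ} {x : ℝ} (hx : IsSumOf I x) (n : ℕ) :
    IsSumOf I (n * x) := by
  induction n with
  | zero => simpa using isSumOf_zero I
  | succ k ih =>
      have := isSumOf_add ih hx
      have h : ((k : ℝ) + 1) * x = k * x + x := by ring
      simpa [Nat.cast_succ, h] using this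

lemma plusSet_isSumOf {I : Set ℝ} {x : ℝ} (hx : x ∈ plusSet I) : IsSumOf I x := by
  rcases hx with h | ⟨_, _, l, _, hl, hs⟩
  · simp only [Set.mem_singleton_iff] at h; subst h; exact isSumOf_zero I
  · exact ⟨l, hl, hs⟩

lemma plusSet_nonneg {I : Set ℝ} {x : ℝ} (hx : x ∈ plusSet I) : 0 ≤ x := by
  rcases hx with h | ⟨h, _⟩
  · simp only [Set.mem_singleton_iff] at h; simp [h]
  · exact h

lemma plusSet_le_one {I : Set ℝ} {x : ℝ} (hx : x ∈ plusSet I) : x ≤ 1 := by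
  rcases hx with h | ⟨_, h, _⟩
  · simp only [Set.mem_singleton_iff] at h; simp [h]
  · exact h

lemma mem_plusSet {I : Set ℝ} {x : ℝ} (hx : IsSumOf I x) (h0 : 0 ≤ x) (h1 : x ≤ 1) :
    x ∈ plusSet I := by
  obtain ⟨l, hl, hs⟩ := hx
  rcases eq_or_ne l [] with rfl | hne
  · left; simp at hs; simp [hs.symm]
  · exact Or.inr ⟨h0, h1, l, hne, hl, hs⟩

lemma key (I : Set ℝ) : ∀ l : List ℝ, (∀ a ∈ l, a ∈ DSet I) →
    (1 ≤ l.sum ∨ ∃ M : ℕ, 0 < M ∧ ∃ F, IsSumOf I F ∧ 0 ≤ F ∧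
      l.sum = ((M : ℝ) - 1 + F) / M) := by
  intro l
  induction l with
  | nil => intro _; right; exact ⟨1, one_pos, 0, isSumOf_zero I, le_refl 0, by norm_num⟩
  | cons b t ih =>
      intro hmem
      obtain ⟨hb1, m1, hm1, f1, hf1, hbe⟩ := hmem b (by simp)
      have hf1n : 0 ≤ f1 := plusSet_nonneg hf1
      have hm1R : (1 : ℝ) ≤ m1 := by exact_mod_cast hm1
      have hm1ne : (m1 : ℝ) ≠ 0 := by positivity
      have hb0 : 0 ≤ b := by
        rw [hbe]; apply div_nonneg _ (by positivity); linarith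
      rcases ih (fun a ha => hmem a (by simp [ha])) with hge | ⟨M, hM, F, hF, hF0, hte⟩
      · left; simp only [List.sum_cons]; linarith
      · have hMR : (1 : ℝ) ≤ M := by exact_mod_cast hM
        have hMne : (M : ℝ) ≠ 0 := by positivity
        rcases eq_or_lt_of_le (show 1 ≤ m1 from hm1) with h1 | h1
        · -- m1 = 1
          have hm1e : (m1 : ℝ) = 1 := by exact_mod_cast h1.symm
          right
          refine ⟨M, hM, F + M * f1, isSumOf_add hF (isSumOf_nsmul (plusSet_isSumOf hf1) M),
            by positivity, ?_⟩
          simp only [List.sum_cons, hbe, hte, hm1e]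
          field_simp
          ring
        · rcases eq_or_lt_of_le (show 1 ≤ M from hM) with h2 | h2
          · -- M = 1
            have hMe : (M : ℝ) = 1 := by exact_mod_cast h2.symm
            right
            refine ⟨m1, hm1, f1 + m1 * F, isSumOf_add (plusSet_isSumOf hf1)
              (isSumOf_nsmul hF m1), by positivity, ?_⟩
            simp only [List.sum_cons, hbe, hte, hMe]
            field_simp
            ring
          · -- both ≥ 2
            left
            have hm2 : (2 : ℝ) ≤ m1 := by exact_mod_cast h1
            have hM2 : (2 : ℝ) ≤ M := by exact_mod_cast h2
            have hbh : (1:ℝ)/2 ≤ b := by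
              rw [hbe, le_div_iff₀ (by linarith)]; nlinarith
            have hth : (1:ℝ)/2 ≤ t.sum := by
              rw [hte, le_div_iff₀ (by linarith)]; nlinarith
            simp only [List.sum_cons]; linarith

theorem DSet_DSet (I : Set ℝ) (hI : ∀ x ∈ I, 0 ≤ x) :
    DSet (DSet I) = DSet I ∪ {1} := by
  ext a
  constructor
  · rintro ⟨ha1, m, hm, f, hf, hae⟩
    have hmR : (1 : ℝ) ≤ m := by exact_mod_cast hm
    have hmne : (m : ℝ) ≠ 0 := by positivity
    rcases hf with hf0 | ⟨hf0, hfle, l, hlne, hl, hls⟩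
    · simp only [Set.mem_singleton_iff] at hf0; subst hf0
      left
      exact ⟨ha1, m, hm, 0, Or.inl rfl, hae⟩
    · rcases key I l hl with hge | ⟨M, hM, F, hF, hF0, hle⟩
      · right
        have : f = 1 := le_antisymm hfle (hls ▸ hge)
        subst this
        simp only [Set.mem_singleton_iff, hae]
        field_simp
        ring
      · left
        have hMR : (1 : ℝ) ≤ M := by exact_mod_cast hM
        have hMne : (M : ℝ) ≠ 0 := by positivity
        have hfe : f = ((M : ℝ) - 1 + F) / M := hls ▸ hle
        have haeq : a = (((m * M : ℕ) : ℝ) - 1 + F) / (m * M : ℕ) := by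
          push_cast
          rw [hae, hfe]
          field_simp
          ring
        have hF1 : F ≤ 1 := by
          have hfle1 : f ≤ 1 := hfle
          rw [hfe, div_le_one (by linarith)] at hfle1
          linarith
        exact ⟨ha1, m * M, Nat.mul_pos hm hM, F, mem_plusSet hF hF0 hF1, haeq⟩
  · rintro (⟨ha1, m, hm, f, hf, hae⟩ | ha)
    · have hmR : (1 : ℝ) ≤ m := by exact_mod_cast hm
      have hf0 : 0 ≤ f := plusSet_nonneg hf
      have ha0 : 0 ≤ a := by
        rw [hae]; apply div_nonneg _ (by positivity); linarith
      refine ⟨ha1, 1, one_pos, a, ?_, by norm_num⟩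
      exact Or.inr ⟨ha0, ha1, [a], by simp, by
        intro j hj; simp at hj; subst hj
        exact ⟨ha1, m, hm, f, hf, hae⟩, by simp⟩
    · simp only [Set.mem_singleton_iff] at ha; subst ha
      have hhalf : (2:ℝ)⁻¹ ∈ DSet I := by
        refine ⟨by norm_num, 2, by norm_num, 0, Or.inl rfl, by norm_num⟩
      refine ⟨le_refl 1, 1, one_pos, 1, ?_, by norm_num⟩
      exact Or.inr ⟨by norm_num, le_refl 1, [1/2, 1/2], by simp, by
        intro j hj; simp at hj; subst hj; exact hhalf, by norm_num⟩
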